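/- Let Ω ⊆ ℝⁿ be open, ε : {1,…,n} → {1, −1}, h : Ω → ℝ be C², and set fⁱ = εⁱh_i, B = ½Σ_kε^k(u^k)², A = Σ_k u^k h_k − h, N = h, M = ½Σ_kε^k h_k². Define the point generators p(u) = (1, u, B, N, 0), r(u) = (0, f, A, M, 1) ∈ ℝ^{n+4} and the dual (hyperplane) generators p̃(u) = (Σᵢuⁱ B_i − B, −B_1, …, −B_n, 1, 0, Σᵢfⁱ B_i − A) and r̃(u) = (Σᵢuⁱ N_i − N, −N_1, …, −N_n, 0, 1, Σᵢfⁱ N_i − M). Then for every u ∈ Ω and every Y ∈ ℝ^{n+4}: p̃(u)·Y = −(p(u), Y) and r̃(u)·Y = −(r(u), Y), where p̃·Y = Σ p̃ᵢYᵢ is the dual pairing and (X,Y) = Σᵢ εⁱ XᵢYᵢ − X₀Y_{n+1} − X_{n+1}Y₀ − X_{n+2}Y_{n+3} − X_{n+3}Y_{n+2}. Hence the Hamiltonian system is auto-dual: the points of the dual hypersurface Σ* are exactly the polar hyperplanes of the points of Σ with respect to the quadric (X,X) = 0. -/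

import Mathlib

/-- The dual pairing `Z·Y = Σ Zᵢ Yᵢ` on `ℝ^{n+4}`, realized as
`ℝ × (Fin n → ℝ) × ℝ × ℝ × ℝ`. -/
noncomputable def dotV (n : ℕ) (Z Y : ℝ × (Fin n → ℝ) × ℝ × ℝ × ℝ) : ℝ :=
  Z.1 * Y.1 + (∑ i : Fin n, Z.2.1 i * Y.2.1 i) + Z.2.2.1 * Y.2.2.1 +
    Z.2.2.2.1 * Y.2.2.2.1 + Z.2.2.2.2 * Y.2.2.2.2

/-- The symmetric bilinear form
`(X,Y) = Σᵢ εⁱ XᵢYᵢ − X₀Y_{n+1} − X_{n+1}Y₀ − X_{n+2}Y_{n+3} − X_{n+3}Y_{n+2}`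
on `ℝ^{n+4}`. -/
noncomputable def formQ (n : ℕ) (ε : Fin n → ℝ)
    (X Y : ℝ × (Fin n → ℝ) × ℝ × ℝ × ℝ) : ℝ :=
  (∑ i : Fin n, ε i * X.2.1 i * Y.2.1 i) - X.1 * Y.2.2.1 - X.2.2.1 * Y.1
    - X.2.2.2.1 * Y.2.2.2.2 - X.2.2.2.2 * Y.2.2.2.1

/-- Auxiliary: the derivative of `u ↦ ½ Σ ε k (u k)²` in direction `Pi.single i 1`
is `ε i * u i`. -/
lemma fderivB_single (n : ℕ) (ε : Fin n → ℝ) (u : Fin n → ℝ) (i : Fin n) :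
    fderiv ℝ (fun u : Fin n → ℝ => (1/2:ℝ) * ∑ k : Fin n, ε k * (u k)^2) u (Pi.single i 1)
      = ε i * u i := by
  have H : HasFDerivAt (fun u : Fin n → ℝ => (1/2:ℝ) * ∑ k : Fin n, ε k * (u k)^2)
      ((1/2:ℝ) • ∑ k : Fin n, ε k • (u k • (ContinuousLinearMap.proj k : (Fin n → ℝ) →L[ℝ] ℝ)
        + u k • (ContinuousLinearMap.proj k : (Fin n → ℝ) →L[ℝ] ℝ))) u := by
    refine HasFDerivAt.const_mul (HasFDerivAt.fun_sum fun k _ => ?_) _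
    have h1 : HasFDerivAt (fun v : Fin n → ℝ => v k)
        (ContinuousLinearMap.proj k : (Fin n → ℝ) →L[ℝ] ℝ) u := hasFDerivAt_apply k u
    have h2 : HasFDerivAt (fun v : Fin n → ℝ => v k * v k)
        (u k • (ContinuousLinearMap.proj k : (Fin n → ℝ) →L[ℝ] ℝ)
          + u k • (ContinuousLinearMap.proj k : (Fin n → ℝ) →L[ℝ] ℝ)) u := h1.mul h1
    simpa [sq] using h2.const_mul (ε k)
  rw [H.fderiv]
  simp only [ContinuousLinearMap.smul_apply, ContinuousLinearMap.sum_apply,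
    ContinuousLinearMap.add_apply, ContinuousLinearMap.proj_apply, Pi.single_apply,
    smul_eq_mul]
  rw [Finset.sum_eq_single i]
  · simp; ring
  · intro b _ hb; simp [hb]
  · simp

/-- For the Hamiltonian system with `fⁱ = εⁱh_i`,
`B = ½Σε^k(u^k)²`, `A = Σu^k h_k − h`, `N = h`, `M = ½Σε^k h_k²`, the point
generators `p(u) = (1, u, B, N, 0)`, `r(u) = (0, f, A, M, 1)` and the dual
hyperplane generators
`p̃(u) = (Σuⁱ B_i − B, −B_1, …, −B_n, 1, 0, Σfⁱ B_i − A)`,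
`r̃(u) = (Σuⁱ N_i − N, −N_1, …, −N_n, 0, 1, Σfⁱ N_i − M)`
satisfy `p̃(u)·Y = −(p(u), Y)` and `r̃(u)·Y = −(r(u), Y)` for every `Y`. Hence
the Hamiltonian system is auto-dual: the points of the dual hypersurface `Σ*`
are exactly the polar hyperplanes of the points of `Σ` with respect to the
quadric `(X,X) = 0`. -/
theorem stmt_10
    (n : ℕ) (Ω : Set (Fin n → ℝ)) (hΩ : IsOpen Ω)
    (ε : Fin n → ℝ) (hε : ∀ i, ε i = 1 ∨ ε i = -1)
    (h : (Fin n → ℝ) → ℝ) (hh : ContDiffOn ℝ 2 h Ω)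
    (f : (Fin n → ℝ) → (Fin n → ℝ))
    (A B M N : (Fin n → ℝ) → ℝ)
    (hfdef : ∀ u, ∀ i : Fin n, f u i = ε i * fderiv ℝ h u (Pi.single i 1))
    (hBdef : ∀ u, B u = (1 / 2) * ∑ k : Fin n, ε k * (u k) ^ 2)
    (hAdef : ∀ u, A u = (∑ k : Fin n, u k * fderiv ℝ h u (Pi.single k 1)) - h u)
    (hNdef : ∀ u, N u = h u)
    (hMdef : ∀ u, M u = (1 / 2) * ∑ k : Fin n, ε k * (fderiv ℝ h u (Pi.single k 1)) ^ 2)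
    (p r pt rt : (Fin n → ℝ) → ℝ × (Fin n → ℝ) × ℝ × ℝ × ℝ)
    (hp : ∀ u, p u = (1, u, B u, N u, 0))
    (hr : ∀ u, r u = (0, f u, A u, M u, 1))
    (hpt : ∀ u, pt u =
      ((∑ i : Fin n, u i * fderiv ℝ B u (Pi.single i 1)) - B u,
       fun i => -(fderiv ℝ B u (Pi.single i 1)),
       1, 0,
       (∑ i : Fin n, f u i * fderiv ℝ B u (Pi.single i 1)) - A u))
    (hrt : ∀ u, rt u =
      ((∑ i : Fin n, u i * fderiv ℝ N u (Pi.single i 1)) - N u,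
       fun i => -(fderiv ℝ N u (Pi.single i 1)),
       0, 1,
       (∑ i : Fin n, f u i * fderiv ℝ N u (Pi.single i 1)) - M u)) :
    ∀ u ∈ Ω, ∀ Y : ℝ × (Fin n → ℝ) × ℝ × ℝ × ℝ,
      dotV n (pt u) Y = -(formQ n ε (p u) Y) ∧
      dotV n (rt u) Y = -(formQ n ε (r u) Y) := by
  have hε2 : ∀ i, ε i * ε i = 1 := fun i => by rcases hε i with h1 | h1 <;> rw [h1] <;> ring
  have hBfun : B = fun u => (1/2:ℝ) * ∑ k : Fin n, ε k * (u k)^2 := funext hBdef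
  have hNfun : N = h := funext hNdef
  have hBd : ∀ (u : Fin n → ℝ) (i : Fin n),
      fderiv ℝ B u (Pi.single i 1) = ε i * u i := by
    intro u i; rw [hBfun]; exact fderivB_single n ε u i
  have hNd : ∀ (u : Fin n → ℝ) (i : Fin n),
      fderiv ℝ N u (Pi.single i 1) = fderiv ℝ h u (Pi.single i 1) := by
    intro u i; rw [hNfun]
  intro u hu Y
  constructor
  · simp only [dotV, formQ, hpt u, hp u, hBd]
    have e1 : ∑ i : Fin n, u i * (ε i * u i) = 2 * B u := by
      have e : ∑ i : Fin n, u i * (ε i * u i) = ∑ i : Fin n, ε i * (u i) ^ 2 :=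
        Finset.sum_congr rfl fun i _ => by ring
      rw [e, hBdef u]; ring
    have e2 : ∑ i : Fin n, (-(ε i * u i)) * Y.2.1 i
        = -∑ i : Fin n, ε i * u i * Y.2.1 i := by
      rw [← Finset.sum_neg_distrib]
      exact Finset.sum_congr rfl fun i _ => by ring
    have e3 : ∑ i : Fin n, f u i * (ε i * u i) = A u + h u := by
      have e : ∑ i : Fin n, f u i * (ε i * u i)
          = ∑ i : Fin n, u i * fderiv ℝ h u (Pi.single i 1) := by
        refine Finset.sum_congr rfl fun i _ => ?_
        rw [hfdef u i]
        rcases hε i with h1 | h1 <;> rw [h1] <;> ring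
      rw [e, hAdef u]; ring
    rw [e1, e2, e3, hNdef u]
    ring
  · simp only [dotV, formQ, hrt u, hr u, hNd]
    have e1 : (∑ i : Fin n, u i * fderiv ℝ h u (Pi.single i 1)) = A u + N u := by
      rw [hAdef u, hNdef u]; ring
    have e2 : ∑ i : Fin n, (-(fderiv ℝ h u (Pi.single i 1))) * Y.2.1 i
        = -∑ i : Fin n, ε i * f u i * Y.2.1 i := by
      rw [← Finset.sum_neg_distrib]
      refine Finset.sum_congr rfl fun i _ => ?_
      rw [hfdef u i]
      rcases hε i with h1 | h1 <;> rw [h1] <;> ring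
    have e3 : ∑ i : Fin n, f u i * fderiv ℝ h u (Pi.single i 1) = 2 * M u := by
      have e : ∑ i : Fin n, f u i * fderiv ℝ h u (Pi.single i 1)
          = ∑ i : Fin n, ε i * (fderiv ℝ h u (Pi.single i 1)) ^ 2 := by
        refine Finset.sum_congr rfl fun i _ => ?_
        rw [hfdef u i]
        rcases hε i with h1 | h1 <;> rw [h1] <;> ring
      rw [e, hMdef u]; ring
    rw [e1, e2, e3]
    ring
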